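/- Let W be an optimal entanglement witness on a finite-dimensional bipartite Hilbert space. Then W is tight: there exists a normalized product vector |x⊗y⟩ with ⟨x⊗y|W|x⊗y⟩ = 0. -/

import Mathlib

open Matrix
open scoped ComplexOrder

private lemma sumNormSqProd {n m : ℕ} (x : Fin n → ℂ) (y : Fin m → ℂ) :
    ∑ p : Fin n × Fin m, Complex.normSq (x p.1 * y p.2)
      = (∑ i, Complex.normSq (x i)) * (∑ j, Complex.normSq (y j)) := by
  rw [Finset.sum_mul_sum, Fintype.sum_prod_type]
  simp [Complex.normSq_mul]

private lemma quadSmul {k : Type*} [Fintype k] (M : Matrix k k ℂ) (z : k → ℂ) (c : ℂ) :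
    star (c • z) ⬝ᵥ M *ᵥ (c • z) = (star c * c) * (star z ⬝ᵥ M *ᵥ z) := by
  rw [mulVec_smul, dotProduct_smul, star_smul, smul_dotProduct]
  simp [smul_smul]; ring

private lemma starDotSelf {k : Type*} [Fintype k] (z : k → ℂ) :
    star z ⬝ᵥ z = ((∑ i, Complex.normSq (z i) : ℝ) : ℂ) := by
  simp [dotProduct, Complex.normSq_eq_conj_mul_self]

private lemma sphereCompact (k : ℕ) :
    IsCompact {x : Fin k → ℂ | ∑ i, Complex.normSq (x i) = 1} := by
  apply Metric.isCompact_of_isClosed_isBounded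
  · exact isClosed_eq (continuous_finset_sum _ fun i _ =>
      Complex.continuous_normSq.comp (continuous_apply i)) continuous_const
  · apply Bornology.IsBounded.subset (Metric.isBounded_closedBall (x := 0) (r := 1))
    intro x hx
    simp only [Metric.mem_closedBall, dist_zero_right]
    rw [pi_norm_le_iff_of_nonneg zero_le_one]
    intro i
    have h1 : Complex.normSq (x i) ≤ 1 := by
      calc Complex.normSq (x i) ≤ ∑ j, Complex.normSq (x j) :=
            Finset.single_le_sum (fun j _ => Complex.normSq_nonneg _) (Finset.mem_univ i)
        _ = 1 := hx
    nlinarith [norm_nonneg (x i), Complex.sq_norm (x i)]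

theorem stmt10 (n m : ℕ) (W : Matrix (Fin n × Fin m) (Fin n × Fin m) ℂ)
    (hW : W.IsHermitian)
    (hbp : ∀ (x : Fin n → ℂ) (y : Fin m → ℂ),
      0 ≤ star (fun p : Fin n × Fin m => x p.1 * y p.2) ⬝ᵥ
            W *ᵥ (fun p : Fin n × Fin m => x p.1 * y p.2))
    (hnpsd : ¬ W.PosSemidef)
    (hopt : ¬ ∃ P : Matrix (Fin n × Fin m) (Fin n × Fin m) ℂ,
      P.PosSemidef ∧ P ≠ 0 ∧
      ∀ (x : Fin n → ℂ) (y : Fin m → ℂ),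
        0 ≤ star (fun p : Fin n × Fin m => x p.1 * y p.2) ⬝ᵥ
              (W - P) *ᵥ (fun p : Fin n × Fin m => x p.1 * y p.2)) :
    ∃ (x : Fin n → ℂ) (y : Fin m → ℂ),
      (∑ p : Fin n × Fin m, Complex.normSq (x p.1 * y p.2)) = 1 ∧
      star (fun p : Fin n × Fin m => x p.1 * y p.2) ⬝ᵥ
          W *ᵥ (fun p : Fin n × Fin m => x p.1 * y p.2) = 0 := by
  by_contra hcon
  push_neg at hcon
  -- dimensions are positive, else W would be trivially PSD
  rcases Nat.eq_zero_or_pos n with hn | hn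
  · subst hn
    exact absurd ⟨hW, fun v => by simp [dotProduct, Subsingleton.elim v 0]⟩ hnpsd
  rcases Nat.eq_zero_or_pos m with hm | hm
  · subst hm
    exact absurd ⟨hW, fun v => by simp [dotProduct, Subsingleton.elim v 0]⟩ hnpsd
  -- the compact set of pairs of normalized vectors
  set S1 := {x : Fin n → ℂ | ∑ i, Complex.normSq (x i) = 1} with hS1
  set S2 := {y : Fin m → ℂ | ∑ j, Complex.normSq (y j) = 1} with hS2
  have hK : IsCompact (S1 ×ˢ S2) := (sphereCompact n).prod (sphereCompact m)
  have hne : (S1 ×ˢ S2).Nonempty := by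
    refine ⟨(Pi.single ⟨0, hn⟩ 1, Pi.single ⟨0, hm⟩ 1), ?_, ?_⟩
    · simp [hS1, Pi.single_apply, apply_ite Complex.normSq]
    · simp [hS2, Pi.single_apply, apply_ite Complex.normSq]
  -- the quadratic form
  set f : ((Fin n → ℂ) × (Fin m → ℂ)) → ℝ := fun p =>
    (star (fun q : Fin n × Fin m => p.1 q.1 * p.2 q.2) ⬝ᵥ
      W *ᵥ (fun q : Fin n × Fin m => p.1 q.1 * p.2 q.2)).re with hf
  have hfc : Continuous f := by
    simp only [hf, dotProduct, mulVec, Pi.star_apply]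
    fun_prop
  obtain ⟨p0, hp0, hmin'⟩ := hK.exists_isMinOn hne hfc.continuousOn
  have hmin : ∀ p ∈ S1 ×ˢ S2, f p0 ≤ f p := fun p hp => hmin' hp
  set ε := f p0 with hε
  -- basic facts about points of K
  have key : ∀ p ∈ S1 ×ˢ S2,
      (star (fun q : Fin n × Fin m => p.1 q.1 * p.2 q.2) ⬝ᵥ
        W *ᵥ (fun q : Fin n × Fin m => p.1 q.1 * p.2 q.2)) = ((f p : ℝ) : ℂ) ∧ 0 < f p := by
    rintro ⟨x, y⟩ ⟨hx, hy⟩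
    have hsum : (∑ p : Fin n × Fin m, Complex.normSq (x p.1 * y p.2)) = 1 := by
      rw [sumNormSqProd]; rw [hS1] at hx; rw [hS2] at hy
      rw [Set.mem_setOf_eq] at hx hy; rw [hx, hy, one_mul]
    have hne0 := hcon x y hsum
    have hpos := hbp x y
    rw [Complex.le_def] at hpos
    constructor
    · apply Complex.ext <;> simp [hf, hpos.2.symm]
    · rcases lt_or_eq_of_le hpos.1 with h | h
      · simpa [hf] using h
      · exfalso; apply hne0; apply Complex.ext <;> simp [← h, hpos.2.symm]
  have hεpos : 0 < ε := (key p0 hp0).2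
  -- construct the killer P
  apply hopt
  refine ⟨(ε : ℂ) • 1, ⟨?_, ?_⟩, ?_, ?_⟩
  · -- Hermitian
    unfold Matrix.IsHermitian
    rw [conjTranspose_smul, conjTranspose_one]
    simp
  · -- quadratic form nonneg
    intro v
    exact (PosSemidef.one.smul (a := (ε : ℂ)) (by exact_mod_cast hεpos.le)).2 v
  · -- nonzero
    intro h
    have := congrFun (congrFun h (⟨0, hn⟩, ⟨0, hm⟩)) (⟨0, hn⟩, ⟨0, hm⟩)
    simp only [Matrix.smul_apply, one_apply_eq, smul_eq_mul, mul_one, Matrix.zero_apply] at this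
    exact hεpos.ne' (by exact_mod_cast this)
  · -- block positivity of W - εI
    intro x y
    set z : Fin n × Fin m → ℂ := fun p => x p.1 * y p.2 with hz
    set a := ∑ i, Complex.normSq (x i) with ha
    set b := ∑ j, Complex.normSq (y j) with hb
    have ha0 : 0 ≤ a := Finset.sum_nonneg fun _ _ => Complex.normSq_nonneg _
    have hb0 : 0 ≤ b := Finset.sum_nonneg fun _ _ => Complex.normSq_nonneg _
    rcases eq_or_lt_of_le ha0 with haz | hapos
    · -- x = 0
      have hx0 : ∀ i, x i = 0 := by
        intro i
        have : Complex.normSq (x i) = 0 := by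
          have h1 : Complex.normSq (x i) ≤ 0 := haz ▸
            Finset.single_le_sum (fun j _ => Complex.normSq_nonneg (x j)) (Finset.mem_univ i)
          exact le_antisymm h1 (Complex.normSq_nonneg _)
        exact Complex.normSq_eq_zero.mp this
      have : z = 0 := by funext p; simp [hz, hx0 p.1]
      rw [this]; simp
    rcases eq_or_lt_of_le hb0 with hbz | hbpos
    · have hy0 : ∀ j, y j = 0 := by
        intro j
        have : Complex.normSq (y j) = 0 := by
          have h1 : Complex.normSq (y j) ≤ 0 := hbz ▸
            Finset.single_le_sum (fun i _ => Complex.normSq_nonneg (y i)) (Finset.mem_univ j)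
          exact le_antisymm h1 (Complex.normSq_nonneg _)
        exact Complex.normSq_eq_zero.mp this
      have : z = 0 := by funext p; simp [hz, hy0 p.2]
      rw [this]; simp
    -- normalize
    set x' : Fin n → ℂ := fun i => ((Real.sqrt a)⁻¹ : ℝ) * x i with hx'
    set y' : Fin m → ℂ := fun j => ((Real.sqrt b)⁻¹ : ℝ) * y j with hy'
    have hsa : Real.sqrt a > 0 := Real.sqrt_pos.mpr hapos
    have hsb : Real.sqrt b > 0 := Real.sqrt_pos.mpr hbpos
    have hx'S : x' ∈ S1 := by
      rw [hS1, Set.mem_setOf_eq]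
      simp only [hx', Complex.normSq_mul, ← Complex.ofReal_inv, Complex.normSq_ofReal]
      rw [← Finset.mul_sum, ← ha]
      rw [← Real.sqrt_inv, Real.mul_self_sqrt (inv_nonneg.mpr ha0)]
      field_simp
    have hy'S : y' ∈ S2 := by
      rw [hS2, Set.mem_setOf_eq]
      simp only [hy', Complex.normSq_mul, ← Complex.ofReal_inv, Complex.normSq_ofReal]
      rw [← Finset.mul_sum, ← hb]
      rw [← Real.sqrt_inv, Real.mul_self_sqrt (inv_nonneg.mpr hb0)]
      field_simp
    obtain ⟨heq, hfp⟩ := key (x', y') ⟨hx'S, hy'S⟩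
    have hge : ε ≤ f (x', y') := hmin (x', y') ⟨hx'S, hy'S⟩
    -- relation between z and z'
    set c : ℝ := (Real.sqrt a)⁻¹ * (Real.sqrt b)⁻¹ with hc
    have hzrel : (fun q : Fin n × Fin m => x' q.1 * y' q.2) = (c : ℂ) • z := by
      funext p
      simp only [hx', hy', hz, hc, Pi.smul_apply, smul_eq_mul]
      push_cast
      ring
    have hc2 : (c : ℝ) * c = (a * b)⁻¹ := by
      rw [hc]
      rw [show (Real.sqrt a)⁻¹ * (Real.sqrt b)⁻¹ * ((Real.sqrt a)⁻¹ * (Real.sqrt b)⁻¹)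
          = (Real.sqrt a * Real.sqrt a)⁻¹ * (Real.sqrt b * Real.sqrt b)⁻¹ by
        rw [mul_inv, mul_inv]; ring]
      rw [Real.mul_self_sqrt ha0, Real.mul_self_sqrt hb0, ← mul_inv]
    -- expectation of W on z
    have hWz : star z ⬝ᵥ W *ᵥ z = ((a * b : ℝ) : ℂ) * ((f (x', y') : ℝ) : ℂ) := by
      have h1 : star ((c:ℂ) • z) ⬝ᵥ W *ᵥ ((c:ℂ) • z) = ((f (x', y') : ℝ) : ℂ) := by
        rw [← hzrel]; exact heq
      rw [quadSmul] at h1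
      have hcc : star (c : ℂ) * (c : ℂ) = (((a*b)⁻¹ : ℝ) : ℂ) := by
        rw [Complex.star_def, Complex.conj_ofReal, ← Complex.ofReal_mul, hc2]
      rw [hcc] at h1
      have hab : ((a*b : ℝ) : ℂ) ≠ 0 := by
        simp only [ne_eq, Complex.ofReal_eq_zero]
        positivity
      field_simp at h1 ⊢
      rw [← h1, mul_comm _ (((a*b:ℝ):ℂ)), ← mul_assoc, ← Complex.ofReal_mul,
        mul_one_div_cancel (mul_pos hapos hbpos).ne', Complex.ofReal_one, one_mul]
    -- expectation of P on z
    have hPz : star z ⬝ᵥ ((ε : ℂ) • 1) *ᵥ z = (ε : ℂ) * ((a * b : ℝ) : ℂ) := by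
      rw [smul_mulVec, one_mulVec, dotProduct_smul, smul_eq_mul, starDotSelf]
      congr 1
      rw [hz]
      rw [show (∑ p : Fin n × Fin m, Complex.normSq (x p.1 * y p.2)) = a * b from by
        rw [sumNormSqProd, ← ha, ← hb]]
    rw [sub_mulVec, dotProduct_sub, hWz, hPz]
    have : ((a * b : ℝ) : ℂ) * ((f (x', y') : ℝ) : ℂ) - (ε : ℂ) * ((a * b : ℝ) : ℂ)
        = ((a * b : ℝ) : ℂ) * (((f (x', y') - ε : ℝ)) : ℂ) := by push_cast; ring
    rw [this]
    apply mul_nonneg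
    · rw [Complex.le_def]; constructor
      · simp only [Complex.zero_re, Complex.ofReal_re]; positivity
      · simp
    · rw [Complex.le_def]; constructor
      · simp only [Complex.zero_re, Complex.ofReal_re]; linarith
      · simp
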